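/- If π and σ are permutations of a finite set with hd(π^△, σ^△) = hd(π, σ) − 3, then the permutation πσ^{-1} contains a 3-cycle in its disjoint cycle decomposition; consequently, if π and σ lie in a finite permutation group G, then 3 divides |G|. -/

import Mathlib

noncomputable def hd {Ω : Type*} (π σ : Equiv.Perm Ω) : ℕ :=
  Set.ncard {x | π x ≠ σ x}

open scoped Classical in
noncomputable def ctr {Ω : Type*} (F : Ω) (π : Equiv.Perm Ω) : Equiv.Perm Ω :=
  π.trans (Equiv.swap F (π F))

open scoped Classical in
theorem stmt2 {Ω : Type*} [Fintype Ω] (F : Ω) (π σ : Equiv.Perm Ω)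
    (h : (hd (ctr F π) (ctr F σ) : ℤ) = (hd π σ : ℤ) - 3) :
    (∃ c ∈ (π * σ⁻¹).cycleFactorsFinset, Equiv.Perm.IsThreeCycle c) ∧
      ∀ G : Subgroup (Equiv.Perm Ω), π ∈ G → σ ∈ G → 3 ∣ Nat.card G := by
  classical
  set a := π⁻¹ F with ha
  set b := σ⁻¹ F with hb
  have hpa : π a = F := π.apply_symm_apply F
  have hsb : σ b = F := σ.apply_symm_apply F
  set S : Set Ω := {F, a, b} with hS
  set A : Set Ω := {x | π x ≠ σ x} with hA
  set B : Set Ω := {x | ctr F π x ≠ ctr F σ x} with hB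
  -- ctr agrees outside two points
  have hctrπ : ∀ x, x ≠ F → x ≠ a → ctr F π x = π x := by
    intro x h1 h2
    show Equiv.swap F (π F) (π x) = π x
    apply Equiv.swap_apply_of_ne_of_ne
    · intro hc; exact h2 (π.injective (hc.trans hpa.symm))
    · intro hc; exact h1 (π.injective hc)
  have hctrσ : ∀ x, x ≠ F → x ≠ b → ctr F σ x = σ x := by
    intro x h1 h2
    show Equiv.swap F (σ F) (σ x) = σ x
    apply Equiv.swap_apply_of_ne_of_ne
    · intro hc; exact h2 (σ.injective (hc.trans hsb.symm))
    · intro hc; exact h1 (σ.injective hc)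
  have hdiff : A \ S = B \ S := by
    ext x
    simp only [Set.mem_diff, hS, Set.mem_insert_iff, Set.mem_singleton_iff, not_or,
      hA, hB, Set.mem_setOf_eq]
    constructor
    · rintro ⟨hx, h1, h2, h3⟩
      exact ⟨by rw [hctrπ x h1 h2, hctrσ x h1 h3]; exact hx, h1, h2, h3⟩
    · rintro ⟨hx, h1, h2, h3⟩
      refine ⟨?_, h1, h2, h3⟩
      rw [hctrπ x h1 h2, hctrσ x h1 h3] at hx; exact hx
  have hAc : (A ∩ S).ncard + (A \ S).ncard = A.ncard :=
    Set.ncard_inter_add_ncard_diff_eq_ncard A S (Set.toFinite _)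
  have hBc : (B ∩ S).ncard + (B \ S).ncard = B.ncard :=
    Set.ncard_inter_add_ncard_diff_eq_ncard B S (Set.toFinite _)
  have hhd : A.ncard = B.ncard + 3 := by
    have e1 : hd π σ = A.ncard := rfl
    have e2 : hd (ctr F π) (ctr F σ) = B.ncard := rfl
    rw [e1, e2] at h
    omega
  have key : (A ∩ S).ncard = (B ∩ S).ncard + 3 := by
    rw [← hdiff] at hBc
    omega
  have hSle : S.ncard ≤ 3 := by
    calc S.ncard ≤ ({a, b} : Set Ω).ncard + 1 := Set.ncard_insert_le _ _
    _ ≤ (({b} : Set Ω).ncard + 1) + 1 := by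
        have := Set.ncard_insert_le a ({b} : Set Ω); omega
    _ ≤ 3 := by rw [Set.ncard_singleton]
  have hASle : (A ∩ S).ncard ≤ S.ncard :=
    Set.ncard_le_ncard Set.inter_subset_right (Set.toFinite _)
  have hBS : B ∩ S = ∅ := by
    have h0 : (B ∩ S).ncard = 0 := by omega
    exact (Set.ncard_eq_zero (Set.toFinite _)).1 h0
  have hS3 : 3 ≤ S.ncard := by omega
  -- distinctness
  have haF : a ≠ F := by
    intro hc
    have : S = {F, b} := by rw [hS, hc]; exact Set.insert_idem ..
    rw [this] at hS3
    have h1 := Set.ncard_insert_le F ({b} : Set Ω)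
    rw [Set.ncard_singleton] at h1
    omega
  have hbF : b ≠ F := by
    intro hc
    have : S = {F, a} := by
      rw [hS, hc, Set.pair_comm a F, Set.insert_comm]
      exact Set.insert_idem ..
    rw [this] at hS3
    have h1 := Set.ncard_insert_le F ({a} : Set Ω)
    rw [Set.ncard_singleton] at h1
    omega
  have hab : a ≠ b := by
    intro hc
    have : S = {F, a} := by rw [hS, hc]; rw [Set.pair_eq_singleton]
    rw [this] at hS3
    have h1 := Set.ncard_insert_le F ({a} : Set Ω)
    rw [Set.ncard_singleton] at h1
    omega
  have hmemB : ∀ x ∈ S, ctr F π x = ctr F σ x := by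
    intro x hx
    by_contra hc
    have : x ∈ B ∩ S := ⟨hc, hx⟩
    rw [hBS] at this
    exact this
  -- key equalities
  have hσa : σ a = π F := by
    have h1 := hmemB a (by right; left; rfl)
    have h2 : ctr F π a = π F := by
      show Equiv.swap F (π F) (π a) = π F
      rw [hpa, Equiv.swap_apply_left]
    have h3 : ctr F σ a = σ a := by
      show Equiv.swap F (σ F) (σ a) = σ a
      apply Equiv.swap_apply_of_ne_of_ne
      · intro hc; exact hab (σ.injective (hc.trans hsb.symm))
      · intro hc; exact haF (σ.injective hc)
    rw [h2, h3] at h1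
    exact h1.symm
  have hπb : π b = σ F := by
    have h1 := hmemB b (by right; right; rfl)
    have h2 : ctr F σ b = σ F := by
      show Equiv.swap F (σ F) (σ b) = σ F
      rw [hsb, Equiv.swap_apply_left]
    have h3 : ctr F π b = π b := by
      show Equiv.swap F (π F) (π b) = π b
      apply Equiv.swap_apply_of_ne_of_ne
      · intro hc; exact hab (π.injective (hc.trans hpa.symm)).symm
      · intro hc; exact hbF (π.injective hc)
    rw [h2, h3] at h1
    exact h1
  have hπF : π F ≠ F := fun hc => haF (π.injective (hpa.trans hc.symm))
  have hσF : σ F ≠ F := fun hc => hbF (σ.injective (hsb.trans hc.symm))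
  have hπσF : π F ≠ σ F := by
    intro hc
    exact haF (σ.injective (hσa.trans (hc.trans rfl)))
  set τ := π * σ⁻¹ with hτ
  have hτF : τ F = σ F := by
    show π (σ⁻¹ F) = σ F
    rw [← hb, hπb]
  have hτσ : τ (σ F) = π F := by
    show π (σ⁻¹ (σ F)) = π F
    rw [Equiv.Perm.inv_def, σ.symm_apply_apply]
  have hτπ : τ (π F) = F := by
    show π (σ⁻¹ (π F)) = F
    rw [← hσa, Equiv.Perm.inv_def, σ.symm_apply_apply, hpa]
  -- the cycle of F
  have hFsupp : F ∈ τ.support := by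
    rw [Equiv.Perm.mem_support, hτF]; exact hσF
  set c := τ.cycleOf F with hc
  have hmemfac : c ∈ τ.cycleFactorsFinset :=
    (Equiv.Perm.cycleOf_mem_cycleFactorsFinset_iff).2 hFsupp
  have horbit : ∀ n : ℕ, (τ ^ n) F ∈ ({F, σ F, π F} : Finset Ω) := by
    intro n
    induction n with
    | zero => simp
    | succ k ih =>
      rw [pow_succ', Equiv.Perm.mul_apply]
      simp only [Finset.mem_insert, Finset.mem_singleton] at ih ⊢
      rcases ih with h1 | h1 | h1 <;> rw [h1]
      · rw [hτF]; tauto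
      · rw [hτσ]; tauto
      · rw [hτπ]; tauto
  have hsupp : c.support = ({F, σ F, π F} : Finset Ω) := by
    ext y
    rw [hc, Equiv.Perm.mem_support_cycleOf_iff]
    constructor
    · rintro ⟨hsc, -⟩
      obtain ⟨i, -, hi⟩ := hsc.exists_pow_eq'
      rw [← hi]
      exact horbit i
    · intro hy
      refine ⟨?_, hFsupp⟩
      simp only [Finset.mem_insert, Finset.mem_singleton] at hy
      rcases hy with h1 | h1 | h1
      · rw [h1]
      · exact ⟨1, by rw [h1, zpow_one, hτF]⟩
      · refine ⟨2, ?_⟩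
        rw [h1, show (2:ℤ) = 1 + 1 by norm_num, zpow_add, zpow_one, Equiv.Perm.mul_apply,
          hτF, hτσ]
  have hcard : c.support.card = 3 := by
    rw [hsupp]
    rw [Finset.card_insert_of_notMem (by simp [hσF.symm, Ne.symm hπF]),
      Finset.card_insert_of_notMem (by simp [Ne.symm hπσF]),
      Finset.card_singleton]
  have h3c : c.IsThreeCycle := card_support_eq_three_iff.1 hcard
  refine ⟨⟨c, hmemfac, h3c⟩, ?_⟩
  intro G hπG hσG
  have hτG : τ ∈ G := G.mul_mem hπG (G.inv_mem hσG)
  have h3ct : (3 : ℕ) ∈ τ.cycleType := by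
    rw [Equiv.Perm.cycleType_def]
    exact Multiset.mem_map.2 ⟨c, hmemfac, hcard⟩
  have h3dvd : 3 ∣ orderOf τ := by
    rw [← Equiv.Perm.lcm_cycleType]
    exact Multiset.dvd_lcm h3ct
  have : orderOf (⟨τ, hτG⟩ : G) = orderOf τ := Subgroup.orderOf_mk τ hτG
  calc (3 : ℕ) ∣ orderOf (⟨τ, hτG⟩ : G) := by rw [this]; exact h3dvd
  _ ∣ Nat.card G := orderOf_dvd_natCard _
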